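/- Define a coloring χ on the 2-element subsets of [ℕ]² by χ({e, e'}) = e ∪ e' for distinct e, e' ∈ [ℕ]². Let I be the collection of all X ⊆ [ℕ]² for which there exists N ∈ ℕ such that for every A ⊆ ℕ with |A| ≥ N, [A]² is not a subset of X. Then: (1) χ is 4-bounded; (2) I is an ideal on [ℕ]²; and (3) every X ⊆ [ℕ]² that is polychromatic for χ belongs to I. -/

import Mathlib

/-- An edge: a 2-element subset of `ℕ`. -/
abbrev Edge := {e : Finset ℕ // e.card = 2}

/-- The ideal of sets of edges not containing complete graphs `[A]²` for arbitrarily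
large finite `A ⊆ ℕ`. -/
def edgeIdeal : Set (Set Edge) :=
  {X | ∃ N : ℕ, ∀ A : Finset ℕ, N ≤ A.card → ∃ e : Edge, (e : Finset ℕ) ⊆ A ∧ e ∉ X}



lemma edge_two (e : Edge) : ∃ x y, x ≠ y ∧ (e : Finset ℕ) = {x, y} := by
  obtain ⟨x, y, h, he⟩ := Finset.card_eq_two.mp e.2
  exact ⟨x, y, h, he⟩

lemma card_eq_four {c : Finset ℕ} (h : c.card = 4) :
    ∃ a b d g : ℕ, a ≠ b ∧ a ≠ d ∧ a ≠ g ∧ b ≠ d ∧ b ≠ g ∧ d ≠ g ∧ c = {a, b, d, g} := by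
  have hpos : 0 < c.card := by omega
  obtain ⟨a, ha⟩ := Finset.card_pos.mp hpos
  have h3 : (c.erase a).card = 3 := by rw [Finset.card_erase_of_mem ha]; omega
  obtain ⟨b, d, g, hbd, hbg, hdg, he⟩ := Finset.card_eq_three.mp h3
  have hab : a ∉ ({b, d, g} : Finset ℕ) := he ▸ Finset.notMem_erase a c
  simp only [Finset.mem_insert, Finset.mem_singleton, not_or] at hab
  exact ⟨a, b, d, g, hab.1, hab.2.1, hab.2.2, hbd, hbg, hdg, by
    rw [← Finset.insert_erase ha, he]⟩

lemma insert_edge {a : ℕ} {B : Finset ℕ} (ha : a ∉ B) (e : Edge)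
    (he : (e : Finset ℕ) ⊆ insert a B) :
    (e : Finset ℕ) ⊆ B ∨ ∃ x ∈ B, (e : Finset ℕ) = {a, x} := by
  by_cases hma : a ∈ (e : Finset ℕ)
  · right
    obtain ⟨x, y, hxy, hexy⟩ := edge_two e
    rw [hexy] at hma he ⊢
    simp only [Finset.mem_insert, Finset.mem_singleton] at hma
    have hx := he (Finset.mem_insert_self x {y})
    have hy := he (Finset.mem_insert_of_mem (Finset.mem_singleton_self y))
    simp only [Finset.mem_insert, Finset.mem_singleton] at hx hy
    rcases hma with rfl | rfl
    · refine ⟨y, ?_, rfl⟩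
      rcases hy with rfl | hy
      · exact absurd rfl hxy
      · exact hy
    · refine ⟨x, ?_, by rw [Finset.pair_comm]⟩
      rcases hx with rfl | hx
      · exact absurd rfl hxy
      · exact hx
  · left
    intro z hz
    rcases Finset.mem_insert.mp (he hz) with rfl | h
    · exact absurd hz hma
    · exact h

lemma myRamsey : ∀ m n : ℕ, ∃ R : ℕ, ∀ (X : Set Edge) (A : Finset ℕ), R ≤ A.card →
    (∃ B ⊆ A, m ≤ B.card ∧ ∀ e : Edge, (e : Finset ℕ) ⊆ B → e ∈ X) ∨
    (∃ B ⊆ A, n ≤ B.card ∧ ∀ e : Edge, (e : Finset ℕ) ⊆ B → e ∉ X) := by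
  have empt : ∀ (e : Edge), ¬ (e : Finset ℕ) ⊆ (∅ : Finset ℕ) := by
    intro e he
    have := e.2
    rw [Finset.subset_empty] at he
    rw [he] at this
    simp at this
  intro m
  induction m with
  | zero =>
    intro n
    exact ⟨0, fun X A _ => Or.inl ⟨∅, Finset.empty_subset _, le_rfl,
      fun e he => absurd he (empt e)⟩⟩
  | succ m ihm =>
    intro n
    induction n with
    | zero =>
      exact ⟨0, fun X A _ => Or.inr ⟨∅, Finset.empty_subset _, le_rfl,
        fun e he => absurd he (empt e)⟩⟩
    | succ n ihn =>
      obtain ⟨R₁, h₁⟩ := ihm (n + 1)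
      obtain ⟨R₂, h₂⟩ := ihn
      refine ⟨R₁ + R₂ + 1, fun X A hA => ?_⟩
      classical
      have hpos : 0 < A.card := by omega
      obtain ⟨a, ha⟩ := Finset.card_pos.mp hpos
      set A' := A.erase a with hA'
      have hcA' : R₁ + R₂ ≤ A'.card := by
        rw [hA', Finset.card_erase_of_mem ha]; omega
      set p : ℕ → Prop := fun x => ∃ e : Edge, (e : Finset ℕ) = {a, x} ∧ e ∈ X with hp
      set P := A'.filter p with hP
      set Q := A'.filter (fun x => ¬ p x) with hQ
      have hPQ : P.card + Q.card = A'.card := Finset.card_filter_add_card_filter_not _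
      have hsubP : P ⊆ A := hP ▸ (Finset.filter_subset _ _).trans (Finset.erase_subset a A)
      have hsubQ : Q ⊆ A := hQ ▸ (Finset.filter_subset _ _).trans (Finset.erase_subset a A)
      have key : R₁ ≤ P.card ∨ R₂ ≤ Q.card := by omega
      rcases key with hk | hk
      · rcases h₁ X P hk with ⟨B, hBP, hBc, hBX⟩ | ⟨B, hBP, hBc, hBX⟩
        · -- all edges in B are in X, extend with a
          have haB : a ∉ B := fun h => Finset.notMem_erase a A (Finset.mem_of_mem_filter a (hBP h))
          refine Or.inl ⟨insert a B, ?_, ?_, ?_⟩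
          · intro z hz
            rcases Finset.mem_insert.mp hz with rfl | h
            · exact ha
            · exact hsubP (hBP h)
          · rw [Finset.card_insert_of_notMem haB]; omega
          · intro e he
            rcases insert_edge haB e he with h | ⟨x, hx, hex⟩
            · exact hBX e h
            · have hxP : x ∈ P := hBP hx
              obtain ⟨e', he', he'X⟩ := (Finset.mem_filter.mp hxP).2
              have : e = e' := Subtype.ext (by rw [hex, he'])
              rw [this]; exact he'X
        · exact Or.inr ⟨B, hBP.trans hsubP, hBc, hBX⟩
      · rcases h₂ X Q hk with ⟨B, hBQ, hBc, hBX⟩ | ⟨B, hBQ, hBc, hBX⟩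
        · exact Or.inl ⟨B, hBQ.trans hsubQ, hBc, hBX⟩
        · have haB : a ∉ B := fun h => Finset.notMem_erase a A (Finset.mem_of_mem_filter a (hBQ h))
          refine Or.inr ⟨insert a B, ?_, ?_, ?_⟩
          · intro z hz
            rcases Finset.mem_insert.mp hz with rfl | h
            · exact ha
            · exact hsubQ (hBQ h)
          · rw [Finset.card_insert_of_notMem haB]; omega
          · intro e he heX
            rcases insert_edge haB e he with h | ⟨x, hx, hex⟩
            · exact hBX e h heX
            · have hxQ : x ∈ Q := hBQ hx
              exact (Finset.mem_filter.mp hxQ).2 ⟨e, hex, heX⟩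


lemma union_card_bounds {e e' : Edge} (h : e ≠ e') :
    3 ≤ ((e : Finset ℕ) ∪ (e' : Finset ℕ)).card ∧ ((e : Finset ℕ) ∪ (e' : Finset ℕ)).card ≤ 4 := by
  constructor
  · by_contra hc
    push_neg at hc
    have h1 : (e : Finset ℕ) = (e : Finset ℕ) ∪ (e' : Finset ℕ) :=
      Finset.eq_of_subset_of_card_le Finset.subset_union_left (by omega)
    have h2 : (e' : Finset ℕ) = (e : Finset ℕ) ∪ (e' : Finset ℕ) :=
      Finset.eq_of_subset_of_card_le Finset.subset_union_right
        (by have := e'.2; omega)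
    exact h (Subtype.ext (h1.trans h2.symm))
  · calc ((e : Finset ℕ) ∪ (e' : Finset ℕ)).card ≤ (e : Finset ℕ).card + (e' : Finset ℕ).card :=
        Finset.card_union_le _ _
    _ = 4 := by rw [e.2, e'.2]

lemma triple_encard (x y z : Set Edge) : ({x, y, z} : Set (Set Edge)).encard ≤ 4 := by
  apply le_trans (Set.encard_insert_le _ _)
  apply le_trans (add_le_add_left (Set.encard_insert_le _ _) 1)
  rw [Set.encard_singleton]
  norm_num

lemma chiBound (c : Finset ℕ) :
    {P : Set Edge | ∃ e e' : Edge, e ≠ e' ∧ P = {e, e'} ∧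
      (e : Finset ℕ) ∪ (e' : Finset ℕ) = c}.encard ≤ 4 := by
  set S := {P : Set Edge | ∃ e e' : Edge, e ≠ e' ∧ P = {e, e'} ∧
      (e : Finset ℕ) ∪ (e' : Finset ℕ) = c} with hS
  by_cases h3 : c.card = 3
  · obtain ⟨a, b, d, hab, had, hbd, hc⟩ := Finset.card_eq_three.mp h3
    subst hc
    have sub3 : ∀ e : Edge, (e : Finset ℕ) ⊆ {a, b, d} →
        (e : Finset ℕ) = {a, b} ∨ (e : Finset ℕ) = {a, d} ∨ (e : Finset ℕ) = {b, d} := by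
      intro e hsub
      obtain ⟨x, y, hxy, hexy⟩ := edge_two e
      have hx : x ∈ ({a, b, d} : Finset ℕ) := hsub (by rw [hexy]; simp)
      have hy : y ∈ ({a, b, d} : Finset ℕ) := hsub (by rw [hexy]; simp)
      simp only [Finset.mem_insert, Finset.mem_singleton] at hx hy
      rw [hexy]
      rcases hx with rfl | rfl | rfl <;> rcases hy with rfl | rfl | rfl <;>
        first
          | exact absurd rfl hxy
          | exact Or.inl rfl
          | exact Or.inl (Finset.pair_comm _ _)
          | exact Or.inr (Or.inl rfl)
          | exact Or.inr (Or.inl (Finset.pair_comm _ _))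
          | exact Or.inr (Or.inr rfl)
          | exact Or.inr (Or.inr (Finset.pair_comm _ _))
    set E1 : Edge := ⟨{a, b}, Finset.card_pair hab⟩
    set E2 : Edge := ⟨{a, d}, Finset.card_pair had⟩
    set E3 : Edge := ⟨{b, d}, Finset.card_pair hbd⟩
    have hsub : S ⊆ {({E1, E2} : Set Edge), {E1, E3}, {E2, E3}} := by
      rintro P ⟨e, e', hne, rfl, hun⟩
      have he : (e : Finset ℕ) ⊆ {a, b, d} := hun ▸ Finset.subset_union_left
      have he' : (e' : Finset ℕ) ⊆ {a, b, d} := hun ▸ Finset.subset_union_right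
      simp only [Set.mem_insert_iff, Set.mem_singleton_iff]
      rcases sub3 e he with h1 | h1 | h1 <;> rcases sub3 e' he' with h2 | h2 | h2 <;>
        first
          | exact absurd (Subtype.ext (h1.trans h2.symm)) hne
          | exact Or.inl (by rw [show e = E1 from Subtype.ext h1,
              show e' = E2 from Subtype.ext h2])
          | exact Or.inl (by rw [show e = E2 from Subtype.ext h1,
              show e' = E1 from Subtype.ext h2]; exact Set.pair_comm _ _)
          | exact Or.inr (Or.inl (by rw [show e = E1 from Subtype.ext h1,
              show e' = E3 from Subtype.ext h2]))
          | exact Or.inr (Or.inl (by rw [show e = E3 from Subtype.ext h1,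
              show e' = E1 from Subtype.ext h2]; exact Set.pair_comm _ _))
          | exact Or.inr (Or.inr (by rw [show e = E2 from Subtype.ext h1,
              show e' = E3 from Subtype.ext h2]))
          | exact Or.inr (Or.inr (by rw [show e = E3 from Subtype.ext h1,
              show e' = E2 from Subtype.ext h2]; exact Set.pair_comm _ _))
    exact le_trans (Set.encard_mono hsub) (triple_encard _ _ _)
  · by_cases h4 : c.card = 4
    · obtain ⟨a, b, d, g, hab, had, hag, hbd, hbg, hdg, hc⟩ := card_eq_four h4
      subst hc
      set E1 : Edge := ⟨{a, b}, Finset.card_pair hab⟩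
      set E2 : Edge := ⟨{d, g}, Finset.card_pair hdg⟩
      set E3 : Edge := ⟨{a, d}, Finset.card_pair had⟩
      set E4 : Edge := ⟨{b, g}, Finset.card_pair hbg⟩
      set E5 : Edge := ⟨{a, g}, Finset.card_pair hag⟩
      set E6 : Edge := ⟨{b, d}, Finset.card_pair hbd⟩
      have key : ∀ f f' : Edge, f ≠ f' →
          (f : Finset ℕ) ∪ (f' : Finset ℕ) = {a, b, d, g} → a ∈ (f : Finset ℕ) →
          ({f, f'} : Set Edge) = {E1, E2} ∨ ({f, f'} : Set Edge) = {E3, E4} ∨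
            ({f, f'} : Set Edge) = {E5, E6} := by
        intro f f' hne hun hma
        have hinter : ((f : Finset ℕ) ∩ (f' : Finset ℕ)).card = 0 := by
          have := Finset.card_union_add_card_inter (f : Finset ℕ) (f' : Finset ℕ)
          rw [hun] at this
          have hf := f.2; have hf' := f'.2
          omega
        have hdisj : Disjoint (f : Finset ℕ) (f' : Finset ℕ) := by
          rw [Finset.disjoint_iff_inter_eq_empty]
          exact Finset.card_eq_zero.mp hinter
        have hsd : (f' : Finset ℕ) = ({a, b, d, g} : Finset ℕ) \ (f : Finset ℕ) := by
          ext z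
          simp only [Finset.mem_sdiff]
          constructor
          · intro hz
            exact ⟨hun ▸ Finset.mem_union_right _ hz,
              fun hzf => (Finset.disjoint_left.mp hdisj hzf) hz⟩
          · rintro ⟨hzc, hzf⟩
            rcases Finset.mem_union.mp (hun ▸ hzc : z ∈ (f : Finset ℕ) ∪ (f' : Finset ℕ)) with
              h | h
            · exact absurd h hzf
            · exact h
        obtain ⟨x, y, hxy, hfxy⟩ := edge_two f
        rw [hfxy] at hma
        simp only [Finset.mem_insert, Finset.mem_singleton] at hma
        have hfax : ∃ x', x' ≠ a ∧ (f : Finset ℕ) = {a, x'} := by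
          rcases hma with rfl | rfl
          · exact ⟨y, fun h => hxy h.symm, hfxy⟩
          · exact ⟨x, fun h => hxy h, by rw [hfxy, Finset.pair_comm]⟩
        obtain ⟨x', hx'a, hfa⟩ := hfax
        have hx'c : x' ∈ ({a, b, d, g} : Finset ℕ) := by
          have : x' ∈ (f : Finset ℕ) := by rw [hfa]; simp
          have hsubf : (f : Finset ℕ) ⊆ {a, b, d, g} := hun ▸ Finset.subset_union_left
          exact hsubf this
        simp only [Finset.mem_insert, Finset.mem_singleton] at hx'c
        rcases hx'c with rfl | rfl | rfl | rfl
        · exact absurd rfl hx'a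
        · -- f = {a,b}, f' = {d,g}
          refine Or.inl ?_
          have hf'dg : (f' : Finset ℕ) = {d, g} := by
            rw [hsd, hfa]; ext z; simp only [Finset.mem_sdiff, Finset.mem_insert,
              Finset.mem_singleton]; omega
          rw [show f = E1 from Subtype.ext hfa, show f' = E2 from Subtype.ext hf'dg]
        · refine Or.inr (Or.inl ?_)
          have hf' : (f' : Finset ℕ) = {b, g} := by
            rw [hsd, hfa]; ext z; simp only [Finset.mem_sdiff, Finset.mem_insert,
              Finset.mem_singleton]; omega
          rw [show f = E3 from Subtype.ext hfa, show f' = E4 from Subtype.ext hf']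
        · refine Or.inr (Or.inr ?_)
          have hf' : (f' : Finset ℕ) = {b, d} := by
            rw [hsd, hfa]; ext z; simp only [Finset.mem_sdiff, Finset.mem_insert,
              Finset.mem_singleton]; omega
          rw [show f = E5 from Subtype.ext hfa, show f' = E6 from Subtype.ext hf']
      have hsub : S ⊆ {({E1, E2} : Set Edge), {E3, E4}, {E5, E6}} := by
        rintro P ⟨e, e', hne, rfl, hun⟩
        have hac : a ∈ (e : Finset ℕ) ∪ (e' : Finset ℕ) := by rw [hun]; simp
        simp only [Set.mem_insert_iff, Set.mem_singleton_iff]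
        rcases Finset.mem_union.mp hac with h | h
        · exact key e e' hne hun h
        · rw [Set.pair_comm]
          exact key e' e hne.symm (by rw [Finset.union_comm]; exact hun) h
      exact le_trans (Set.encard_mono hsub) (triple_encard _ _ _)
    · have hempty : S = ∅ := by
        rw [Set.eq_empty_iff_forall_notMem]
        rintro P ⟨e, e', hne, _, hun⟩
        obtain ⟨hl, hr⟩ := union_card_bounds hne
        rw [hun] at hl hr
        omega
      rw [hempty, Set.encard_empty]
      norm_num




lemma finite_mem (X : Set Edge) (hX : X.Finite) : X ∈ edgeIdeal := by
  classical
  set B : Finset ℕ := hX.toFinset.biUnion (fun e => (e : Finset ℕ)) with hB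
  refine ⟨B.card + 2, fun A hA => ?_⟩
  have hcard : 2 ≤ (A \ B).card := by
    have h1 := Finset.le_card_sdiff B A
    omega
  obtain ⟨x, hx, y, hy, hxy⟩ := Finset.one_lt_card.mp (by omega : 1 < (A \ B).card)
  refine ⟨⟨{x, y}, Finset.card_pair hxy⟩, ?_, ?_⟩
  · intro z hz
    simp only [Finset.mem_insert, Finset.mem_singleton] at hz
    rcases hz with rfl | rfl
    · exact (Finset.mem_sdiff.mp hx).1
    · exact (Finset.mem_sdiff.mp hy).1
  · intro hmem
    apply (Finset.mem_sdiff.mp hx).2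
    rw [hB]
    exact Finset.mem_biUnion.mpr ⟨_, hX.mem_toFinset.mpr hmem, by simp⟩

lemma subset_mem (X Y : Set Edge) (hXY : X ⊆ Y) (hY : Y ∈ edgeIdeal) : X ∈ edgeIdeal := by
  obtain ⟨N, hN⟩ := hY
  exact ⟨N, fun A hA => by
    obtain ⟨e, he, heY⟩ := hN A hA
    exact ⟨e, he, fun h => heY (hXY h)⟩⟩

lemma univ_not_mem : (Set.univ : Set Edge) ∉ edgeIdeal := by
  rintro ⟨N, hN⟩
  obtain ⟨e, _, he⟩ := hN (Finset.range N) (by simp)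
  exact he (Set.mem_univ e)

lemma poly_mem (X : Set Edge)
    (hpoly : ∀ e e' f f' : Edge, e ∈ X → e' ∈ X → f ∈ X → f' ∈ X → e ≠ e' → f ≠ f' →
      (e : Finset ℕ) ∪ (e' : Finset ℕ) = (f : Finset ℕ) ∪ (f' : Finset ℕ) →
      ({e, e'} : Set Edge) = {f, f'}) :
    X ∈ edgeIdeal := by
  refine ⟨4, fun A hA => ?_⟩
  by_contra hc
  push_neg at hc
  obtain ⟨B, hBA, hB4⟩ := Finset.exists_subset_card_eq hA
  obtain ⟨a, b, d, g, hab, had, hag, hbd, hbg, hdg, hc4⟩ := card_eq_four hB4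
  have hmem : ∀ z ∈ ({a, b, d, g} : Finset ℕ), z ∈ A := fun z hz => hBA (hc4 ▸ hz)
  have ha : a ∈ A := hmem a (by simp)
  have hb : b ∈ A := hmem b (by simp)
  have hd : d ∈ A := hmem d (by simp)
  have hg : g ∈ A := hmem g (by simp)
  set e1 : Edge := ⟨{a, b}, Finset.card_pair hab⟩
  set e2 : Edge := ⟨{d, g}, Finset.card_pair hdg⟩
  set e3 : Edge := ⟨{a, d}, Finset.card_pair had⟩
  set e4 : Edge := ⟨{b, g}, Finset.card_pair hbg⟩
  have sub : ∀ u v : ℕ, u ∈ A → v ∈ A → ({u, v} : Finset ℕ) ⊆ A := by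
    intro u v hu hv z hz
    simp only [Finset.mem_insert, Finset.mem_singleton] at hz
    rcases hz with rfl | rfl <;> assumption
  have he1 : e1 ∈ X := hc e1 (sub a b ha hb)
  have he2 : e2 ∈ X := hc e2 (sub d g hd hg)
  have he3 : e3 ∈ X := hc e3 (sub a d ha hd)
  have he4 : e4 ∈ X := hc e4 (sub b g hb hg)
  have hne12 : e1 ≠ e2 := by
    intro h
    have : a ∈ ({d, g} : Finset ℕ) := by
      rw [← show (e2 : Finset ℕ) = {d, g} from rfl, ← h]; simp [e1, e3]
    simp only [Finset.mem_insert, Finset.mem_singleton] at this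
    tauto
  have hne34 : e3 ≠ e4 := by
    intro h
    have : a ∈ ({b, g} : Finset ℕ) := by
      rw [← show (e4 : Finset ℕ) = {b, g} from rfl, ← h]; simp [e1, e3]
    simp only [Finset.mem_insert, Finset.mem_singleton] at this
    tauto
  have hun : (e1 : Finset ℕ) ∪ (e2 : Finset ℕ) = (e3 : Finset ℕ) ∪ (e4 : Finset ℕ) := by
    show ({a, b} : Finset ℕ) ∪ {d, g} = ({a, d} : Finset ℕ) ∪ {b, g}
    ext z
    simp only [Finset.mem_union, Finset.mem_insert, Finset.mem_singleton]
    tauto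
  have heq := hpoly e1 e2 e3 e4 he1 he2 he3 he4 hne12 hne34 hun
  have h3 : e3 ∈ ({e1, e2} : Set Edge) := heq ▸ Set.mem_insert e3 {e4}
  rcases h3 with h | h
  · have : d ∈ ({a, b} : Finset ℕ) := by
      rw [← show (e1 : Finset ℕ) = {a, b} from rfl, ← congrArg Subtype.val h]; simp [e1, e3]
    simp only [Finset.mem_insert, Finset.mem_singleton] at this
    tauto
  · rw [Set.mem_singleton_iff] at h
    have : a ∈ ({d, g} : Finset ℕ) := by
      rw [← show (e2 : Finset ℕ) = {d, g} from rfl, ← congrArg Subtype.val h]; simp [e1, e3]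
    simp only [Finset.mem_insert, Finset.mem_singleton] at this
    tauto

lemma union_mem (X Y : Set Edge) (hX : X ∈ edgeIdeal) (hY : Y ∈ edgeIdeal) :
    X ∪ Y ∈ edgeIdeal := by
  obtain ⟨N₁, hN₁⟩ := hX
  obtain ⟨N₂, hN₂⟩ := hY
  obtain ⟨R, hR⟩ := myRamsey N₁ N₂
  refine ⟨R, fun A hA => ?_⟩
  by_contra hc
  push_neg at hc
  rcases hR X A hA with ⟨B, hBA, hBc, hBX⟩ | ⟨B, hBA, hBc, hBX⟩
  · obtain ⟨e, heB, heX⟩ := hN₁ B hBc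
    exact heX (hBX e heB)
  · obtain ⟨e, heB, heY⟩ := hN₂ B hBc
    rcases hc e (heB.trans hBA) with h | h
    · exact hBX e heB h
    · exact heY h

/-- The coloring `χ({e,e'}) = e ∪ e'` of pairs of edges is 4-bounded, `edgeIdeal` is an ideal
on `[ℕ]²`, and every set of edges polychromatic for `χ` belongs to `edgeIdeal`. -/
theorem edge_coloring_ideal :
    -- (1) χ({e,e'}) = e ∪ e' is 4-bounded
    (∀ c : Finset ℕ,
      {P : Set Edge | ∃ e e' : Edge, e ≠ e' ∧ P = {e, e'} ∧
        (e : Finset ℕ) ∪ (e' : Finset ℕ) = c}.encard ≤ 4) ∧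
    -- (2) edgeIdeal is an ideal on [ℕ]²
    ((∀ X : Set Edge, X.Finite → X ∈ edgeIdeal) ∧
     (∀ X Y : Set Edge, X ⊆ Y → Y ∈ edgeIdeal → X ∈ edgeIdeal) ∧
     (∀ X Y : Set Edge, X ∈ edgeIdeal → Y ∈ edgeIdeal → X ∪ Y ∈ edgeIdeal) ∧
     (Set.univ : Set Edge) ∉ edgeIdeal) ∧
    -- (3) every polychromatic set of edges belongs to edgeIdeal
    (∀ X : Set Edge,
      (∀ e e' f f' : Edge, e ∈ X → e' ∈ X → f ∈ X → f' ∈ X → e ≠ e' → f ≠ f' →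
        (e : Finset ℕ) ∪ (e' : Finset ℕ) = (f : Finset ℕ) ∪ (f' : Finset ℕ) →
        ({e, e'} : Set Edge) = {f, f'}) →
      X ∈ edgeIdeal) :=
  ⟨chiBound, ⟨finite_mem, subset_mem, union_mem, univ_not_mem⟩, poly_mem⟩
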